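/- Let Λ be a finite alphabet and L ⊆ Λ* an upward-closed language with respect to the subsequence relation. Then the set of all left quotients {L/w : w ∈ Λ*} is finite; consequently L is a regular language. -/

import Mathlib

open List

/-- Higman's lemma packaged: over a finite alphabet, from any sequence of words we can
extract an infinite subsequence increasing under the sublist relation. -/
lemma exists_sublist_monotone_subseq {Λ : Type*} [Fintype Λ] (f : ℕ → List Λ) :
    ∃ g : ℕ ↪o ℕ, ∀ m n, m ≤ n → (f (g m)).Sublist (f (g n)) := by
  have h : (Set.univ : Set Λ).PartiallyWellOrderedOn (· = ·) :=
    Set.finite_univ.partiallyWellOrderedOn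
  have h2 := h.partiallyWellOrderedOn_sublistForall₂ (· = ·)
  haveI : IsPreorder (List Λ) (SublistForall₂ (fun x1 x2 : Λ => x1 = x2)) := {}
  obtain ⟨g, hg⟩ := h2.exists_monotone_subseq (f := f) (by simp)
  refine ⟨g, fun m n hmn => ?_⟩
  obtain ⟨l, hl1, hl2⟩ := List.sublistForall₂_iff.1 (hg m n hmn)
  rw [List.forall₂_eq_eq_eq] at hl1
  rwa [hl1]

/-- The quotient automaton of a language: states are the left quotients of `L`. -/
def quotDFA {Λ : Type*} (L : Language Λ) :
    DFA Λ {M : Language Λ // ∃ w : List Λ, M = {u | w ++ u ∈ L}} where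
  step := fun M a => ⟨{u | a :: u ∈ M.1}, by
    obtain ⟨w, hw⟩ := M.2
    refine ⟨w ++ [a], ?_⟩
    ext u
    show a :: u ∈ M.1 ↔ _
    rw [hw]
    show w ++ a :: u ∈ L ↔ (w ++ [a]) ++ u ∈ L
    rw [List.append_assoc]
    rfl⟩
  start := ⟨L, [], by ext u; exact Iff.rfl⟩
  accept := {M | [] ∈ M.1}

lemma quotDFA_evalFrom {Λ : Type*} (L : Language Λ) (x : List Λ)
    (s : {M : Language Λ // ∃ w : List Λ, M = {u | w ++ u ∈ L}}) :
    ((quotDFA L).evalFrom s x).1 = {u | x ++ u ∈ s.1} := by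
  induction x generalizing s with
  | nil => ext u; exact Iff.rfl
  | cons a x ih =>
    show ((quotDFA L).evalFrom ((quotDFA L).step s a) x).1 = _
    rw [ih]
    ext u
    exact Iff.rfl

lemma quotDFA_accepts {Λ : Type*} (L : Language Λ) : (quotDFA L).accepts = L := by
  ext x
  show [] ∈ ((quotDFA L).evalFrom (quotDFA L).start x).1 ↔ x ∈ L
  rw [quotDFA_evalFrom]
  show x ++ [] ∈ L ↔ x ∈ L
  rw [List.append_nil]

theorem upwardClosed_finitely_many_quotients_and_regular {Λ : Type*} [Fintype Λ]
    (L : Language Λ)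
    (hL : ∀ ⦃u w : List Λ⦄, u ∈ L → u.Sublist w → w ∈ L) :
    {M : Language Λ | ∃ w : List Λ, M = {u | w ++ u ∈ L}}.Finite ∧
      ∃ (σ : Type) (_ : Fintype σ) (M : DFA Λ σ), M.accepts = L := by
  classical
  set Q : List Λ → Language Λ := fun w => {u | w ++ u ∈ L} with hQ
  -- quotients are upward closed
  have hq_up : ∀ w : List Λ, ∀ ⦃u v : List Λ⦄, u ∈ Q w → u.Sublist v → v ∈ Q w := by
    intro w u v hu huv
    exact hL hu ((Sublist.refl w).append huv)
  -- sublists give inclusions of quotients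
  have hq_mono : ∀ {w w' : List Λ}, w.Sublist w' → ∀ ⦃u : List Λ⦄, u ∈ Q w → u ∈ Q w' := by
    intro w w' hww' u hu
    exact hL hu (hww'.append (Sublist.refl u))
  -- finiteness of the set of quotients
  have hfin : {M : Language Λ | ∃ w : List Λ, M = {u | w ++ u ∈ L}}.Finite := by
    by_contra hinf
    have hinf' : {M : Language Λ | ∃ w : List Λ, M = {u | w ++ u ∈ L}}.Infinite := hinf
    set e := hinf'.natEmbedding with he
    have hwit : ∀ n : ℕ, ∃ w : List Λ, (e n : Language Λ) = Q w := fun n => (e n).2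
    choose w hw using hwit
    obtain ⟨g, hg⟩ := exists_sublist_monotone_subseq w
    set N : ℕ → Language Λ := fun n => Q (w (g n)) with hN
    have hNmono : ∀ {m n : ℕ}, m ≤ n → ∀ ⦃u : List Λ⦄, u ∈ N m → u ∈ N n :=
      fun {m n} hmn => hq_mono (hg m n hmn)
    have hNne : ∀ n : ℕ, N n ≠ N (n + 1) := by
      intro n hEq
      have h1 : (e (g n) : Language Λ) = (e (g (n + 1)) : Language Λ) := by
        rw [hw, hw]; exact hEq
      have h2 := e.injective (Subtype.ext h1)
      exact absurd (g.injective h2) (by omega)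
    have hsep : ∀ n : ℕ, ∃ u : List Λ, u ∈ N (n + 1) ∧ u ∉ N n := by
      intro n
      by_contra hcon
      push_neg at hcon
      refine hNne n ?_
      ext u
      exact ⟨fun hu => hNmono (by omega) hu, fun hu => hcon u hu⟩
    choose u hu1 hu2 using hsep
    obtain ⟨g', hg'⟩ := exists_sublist_monotone_subseq u
    have h01 : g' 0 < g' 1 := g'.strictMono (by omega)
    have hsub := hg' 0 1 (by omega)
    have hin : u (g' 0) ∈ N (g' 1) := hNmono (by omega) (hu1 (g' 0))
    exact hu2 (g' 1) (hq_up _ hin hsub)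
  refine ⟨hfin, ?_⟩
  haveI : Fintype {M : Language Λ // ∃ w : List Λ, M = {u | w ++ u ∈ L}} := hfin.fintype
  let σ₀ := {M : Language Λ // ∃ w : List Λ, M = {u | w ++ u ∈ L}}
  let eq : σ₀ ≃ Fin (Fintype.card σ₀) := Fintype.equivFin σ₀
  refine ⟨Fin (Fintype.card σ₀), inferInstance, DFA.reindex eq (quotDFA L), ?_⟩
  rw [DFA.accepts_reindex, quotDFA_accepts]
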